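/- Let x, y ∈ ℝᴺ. If x is supermajorized by y (x ≺^w y), then there exists v ∈ ℝᴺ with v_i ≥ y_i for every i = 1,…,N such that x is majorized by v (x ≺ v). Explicitly, if y is arranged in decreasing order, one may take v = (q − p + y₁, y₂, …, y_N) where q = ∑ᵢ xᵢ and p = ∑ᵢ yᵢ. -/

import Mathlib

/-- The decreasing rearrangement `x↓` of a vector `x ∈ ℝᴺ`. -/
noncomputable def decRearrange {N : ℕ} (x : Fin N → ℝ) : Fin N → ℝ :=
  fun i => x (Tuple.sort x i.rev)

/-- `∑_{i=1}^{k} x↓_i`, the sum of the `k` largest entries of `x` (0-indexed: indices `< k`). -/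
noncomputable def topSum {N : ℕ} (x : Fin N → ℝ) (k : ℕ) : ℝ :=
  ∑ i ∈ Finset.univ.filter (fun i : Fin N => (i : ℕ) < k), decRearrange x i

/-- `∑_{i=l+1}^{N} x↓_i` (1-indexed), i.e. the sum of `x↓_i` over 0-indexed indices `i ≥ l`. -/
noncomputable def botSum {N : ℕ} (x : Fin N → ℝ) (l : ℕ) : ℝ :=
  ∑ i ∈ Finset.univ.filter (fun i : Fin N => l ≤ (i : ℕ)), decRearrange x i

/-- `x ≺ y` : `x` is majorized by `y`. -/
noncomputable def IsMajorizedBy {N : ℕ} (x y : Fin N → ℝ) : Prop :=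
  (∀ k : ℕ, topSum x k ≤ topSum y k) ∧ (∑ i, x i = ∑ i, y i)

/-- `x ≺_w y` : `x` is submajorized (weakly majorized from below) by `y`. -/
noncomputable def IsSubmajorizedBy {N : ℕ} (x y : Fin N → ℝ) : Prop :=
  ∀ k : ℕ, topSum x k ≤ topSum y k

/-- `x ≺^w y` : `x` is supermajorized (weakly majorized from above) by `y`:
`∑_{i=l}^{N} x↓_i ≥ ∑_{i=l}^{N} y↓_i` for all `l`. -/
noncomputable def IsSupermajorizedBy {N : ℕ} (x y : Fin N → ℝ) : Prop :=
  ∀ l : ℕ, botSum y l ≤ botSum x l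

lemma decR_antitone {N : ℕ} (x : Fin N → ℝ) : Antitone (decRearrange x) := by
  intro i j hij
  exact Tuple.monotone_sort x (Fin.rev_le_rev.2 hij)

lemma decR_of_antitone {N : ℕ} {y : Fin N → ℝ} (hy : Antitone y) :
    decRearrange y = y := by
  have hmono : Monotone (y ∘ (Fin.revPerm : Equiv.Perm (Fin N))) := by
    intro i j hij
    exact hy (Fin.rev_le_rev.2 hij)
  have := Tuple.comp_sort_eq_comp_iff_monotone.mpr hmono
  funext i
  have h2 : y (Fin.revPerm i.rev) = y (Tuple.sort y i.rev) := congrFun this i.rev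
  simpa [decRearrange] using h2.symm

lemma decR_comp_perm {N : ℕ} (y : Fin N → ℝ) (σ : Equiv.Perm (Fin N)) :
    decRearrange (y ∘ σ) = decRearrange y := by
  funext i
  have := Tuple.comp_perm_comp_sort_eq_comp_sort (σ := σ) (f := y)
  calc decRearrange (y ∘ σ) i = ((y ∘ σ) ∘ Tuple.sort (y ∘ σ)) i.rev := rfl
    _ = (y ∘ Tuple.sort y) i.rev := by rw [this]
    _ = decRearrange y i := rfl

lemma sum_decR {N : ℕ} (x : Fin N → ℝ) : ∑ i, decRearrange x i = ∑ i, x i :=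
  Equiv.sum_comp (Fin.revPerm.trans (Tuple.sort x)) x

lemma topSum_zero {N : ℕ} (x : Fin N → ℝ) : topSum x 0 = 0 := by
  simp [topSum]

lemma botSum_zero {N : ℕ} (x : Fin N → ℝ) : botSum x 0 = ∑ i, x i := by
  simpa [botSum] using sum_decR x

lemma topSum_add_botSum {N : ℕ} (x : Fin N → ℝ) (k : ℕ) :
    topSum x k + botSum x k = ∑ i, x i := by
  rw [topSum, botSum]
  have h1 : (Finset.univ.filter (fun i : Fin N => k ≤ (i : ℕ)))
      = Finset.univ.filter (fun i : Fin N => ¬ ((i : ℕ) < k)) := by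
    simp [not_lt]
  rw [h1, Finset.sum_filter_add_sum_filter_not, sum_decR]

lemma core {N : ℕ} (x y : Fin N → ℝ) (h : IsSupermajorizedBy x y) (hy : Antitone y)
    (v : Fin N → ℝ)
    (hv : v = fun i : Fin N => if i.val = 0 then (∑ j, x j) - (∑ j, y j) + y i else y i) :
    (∀ i, y i ≤ v i) ∧ IsMajorizedBy x v := by
  set c : ℝ := (∑ j, x j) - (∑ j, y j) with hc
  have hc0 : 0 ≤ c := by
    have := h 0
    rw [botSum_zero, botSum_zero] at this
    linarith
  have hge : ∀ i, y i ≤ v i := by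
    intro i
    rw [hv]
    dsimp only
    split <;> linarith
  have hv2 : v = fun i : Fin N => y i + (if i.val = 0 then c else 0) := by
    rw [hv]; funext i; split <;> ring
  -- sum of the indicator part
  have hva : Antitone v := by
    intro i j hij
    rw [hv2]
    dsimp only
    have hij' : i.val ≤ j.val := hij
    by_cases hj : j.val = 0
    · have : i = j := Fin.ext (by omega)
      simp [this]
    · rw [if_neg hj, add_zero]
      have hle := hy hij
      by_cases hi : i.val = 0
      · rw [if_pos hi]; linarith
      · rw [if_neg hi, add_zero]; exact hle
  have hdv : decRearrange v = v := decR_of_antitone hva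
  have hdy : decRearrange y = y := decR_of_antitone hy
  have hsum_ite : ∀ s : Finset (Fin N), (∑ i ∈ s, (if i.val = 0 then c else 0))
      = if ∃ i ∈ s, i.val = 0 then c else 0 := by
    intro s
    rcases N with _ | n
    · simp [Finset.eq_empty_of_isEmpty s]
    · have : ∀ i : Fin (n+1), i.val = 0 ↔ i = 0 := fun i => by
        rw [Fin.ext_iff, Fin.val_zero]
      simp only [this]
      rw [Finset.sum_ite_eq' s 0 (fun _ => c)]
      by_cases h0 : (0 : Fin (n+1)) ∈ s
      · simp [h0]
      · simp [h0]
  have hsumv : ∑ i, v i = ∑ i, x i := by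
    rcases Nat.eq_zero_or_pos N with hN | hN
    · subst hN; simp
    · rw [hv2, Finset.sum_add_distrib, hsum_ite]
      have : ∃ i ∈ (Finset.univ : Finset (Fin N)), i.val = 0 :=
        ⟨⟨0, hN⟩, Finset.mem_univ _, rfl⟩
      rw [if_pos this]
      rw [hc]; ring
  refine ⟨hge, ?_, hsumv.symm⟩
  intro k
  rcases Nat.eq_zero_or_pos k with hk | hk
  · subst hk; rw [topSum_zero, topSum_zero]
  rcases Nat.eq_zero_or_pos N with hN | hN
  · subst hN
    simp [topSum, Finset.filter_eq_empty_iff]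
  -- topSum v k = topSum y k + c
  have htv : topSum v k = topSum y k + c := by
    rw [topSum, topSum, hdv, hdy, hv2, Finset.sum_add_distrib, hsum_ite]
    have : ∃ i ∈ Finset.univ.filter (fun i : Fin N => (i : ℕ) < k), i.val = 0 :=
      ⟨⟨0, hN⟩, by simp [hk], rfl⟩
    rw [if_pos this]
  have h1 := h k
  have h2 := topSum_add_botSum x k
  have h3 := topSum_add_botSum y k
  rw [htv, hc]
  linarith

/-- **Lemma 1.** If `x ≺^w y` then there is `v` with `vᵢ ≥ yᵢ` for all `i` and `x ≺ v`.
Explicitly, if `y` is arranged in decreasing order, one may take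
`v = (q − p + y₁, y₂, …, y_N)` where `q = ∑ᵢ xᵢ` and `p = ∑ᵢ yᵢ`. -/
theorem supermajorized_exists_pointwise_ge_majorizing {N : ℕ} (x y : Fin N → ℝ)
    (h : IsSupermajorizedBy x y) :
    (∃ v : Fin N → ℝ, (∀ i, y i ≤ v i) ∧ IsMajorizedBy x v) ∧
    (Antitone y → ∀ v : Fin N → ℝ,
      v = (fun i : Fin N => if i.val = 0 then (∑ j, x j) - (∑ j, y j) + y i else y i) →
      (∀ i, y i ≤ v i) ∧ IsMajorizedBy x v) := by
  constructor
  · -- existence in general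
    set w : Fin N → ℝ := decRearrange y with hw
    have hwa : Antitone w := decR_antitone y
    have h' : IsSupermajorizedBy x w := by
      intro l
      have : botSum w l = botSum y l := by
        rw [botSum, botSum, decR_of_antitone hwa]
      rw [this]; exact h l
    set v' : Fin N → ℝ :=
      fun i : Fin N => if i.val = 0 then (∑ j, x j) - (∑ j, w j) + w i else w i with hv'
    obtain ⟨hge, hmaj⟩ := core x w h' hwa v' hv'
    set π : Equiv.Perm (Fin N) :=
      ((Tuple.sort y)⁻¹ : Equiv.Perm (Fin N)).trans Fin.revPerm with hπ
    have hwπ : ∀ i, w (π i) = y i := by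
      intro i
      show decRearrange y (π i) = y i
      rw [decRearrange]
      have : (π i).rev = (Tuple.sort y)⁻¹ i := by
        rw [hπ]; simp [Fin.rev_rev]
      rw [this]
      simp
    refine ⟨v' ∘ π, fun i => ?_, fun k => ?_, ?_⟩
    · exact le_of_eq_of_le (hwπ i).symm (hge (π i))
    · have : topSum (v' ∘ π) k = topSum v' k := by
        rw [topSum, topSum, decR_comp_perm]
      rw [this]
      exact hmaj.1 k
    · have : ∑ i, (v' ∘ π) i = ∑ i, v' i := Equiv.sum_comp π v'
      rw [this]
      exact hmaj.2
  · intro hy v hv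
    exact core x y h hy v hv
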